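/- In the single-agent setting, a social choice function f : Θ → X is strongly implementable if and only if there exists a payment scheme P : Θ → ℚ satisfying: (a) V(f(θ′), θ) + P(θ′) ≤ V(f(θ), θ) + P(θ) for all θ, θ′ ∈ Θ, and (b) V(f(θ′), θ) + P(θ′) < V(f(θ), θ) + P(θ) for all θ, θ′ with f(θ) ≠ f(θ′). -/

import Mathlib

/-- A single-agent mechanism `(S, g, P)` strongly implements `f` if it has at least one
equilibrium and every equilibrium `α` satisfies `g ∘ α = f`. -/
def StronglyImplements {Θ X S : Type} (V : X → Θ → ℚ) (f : Θ → X)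
    (g : S → X) (P : S → ℚ) : Prop :=
  (∃ α : Θ → S, ∀ θ s, V (g s) θ + P s ≤ V (g (α θ)) θ + P (α θ)) ∧
    ∀ α : Θ → S, (∀ θ s, V (g s) θ + P s ≤ V (g (α θ)) θ + P (α θ)) → g ∘ α = f

/-- Single-agent characterization: `f` is strongly implementable iff there is a payment
scheme `P` with (a) `V(f(θ'), θ) + P(θ') ≤ V(f(θ), θ) + P(θ)` for all `θ, θ'`, and
(b) the strict inequality whenever `f(θ) ≠ f(θ')`. -/
theorem single_agent_strongly_implementable_iff
    {Θ X : Type} [Fintype Θ] [Fintype X]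
    (V : X → Θ → ℚ) (f : Θ → X) :
    (∃ (S : Type) (g : S → X) (P : S → ℚ), StronglyImplements V f g P) ↔
      ∃ P : Θ → ℚ,
        (∀ θ θ' : Θ, V (f θ') θ + P θ' ≤ V (f θ) θ + P θ) ∧
        (∀ θ θ' : Θ, f θ ≠ f θ' → V (f θ') θ + P θ' < V (f θ) θ + P θ) := by
  classical
  constructor
  · rintro ⟨S, g, P, ⟨α, hα⟩, huniq⟩
    have hfα : g ∘ α = f := huniq α hα
    have hg : ∀ t, g (α t) = f t := fun t => congrFun hfα t
    refine ⟨fun θ => P (α θ), ?_, ?_⟩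
    · intro θ θ'
      have := hα θ (α θ')
      simpa [hg θ', hg θ] using this
    · intro θ θ' hne
      by_contra hle
      push_neg at hle
      have hge : V (f θ) θ + P (α θ) ≤ V (f θ') θ + P (α θ') := hle
      -- build a deviating equilibrium
      set α' : Θ → S := Function.update α θ (α θ') with hα'
      have heq' : ∀ t s, V (g s) t + P s ≤ V (g (α' t)) t + P (α' t) := by
        intro t s
        by_cases ht : t = θ
        · subst ht
          have : α' t = α θ' := Function.update_self _ _ _
          rw [this, hg θ']
          calc V (g s) t + P s ≤ V (g (α t)) t + P (α t) := hα t s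
            _ = V (f t) t + P (α t) := by rw [hg t]
            _ ≤ V (f θ') t + P (α θ') := hge
        · have : α' t = α t := Function.update_of_ne ht _ _
          rw [this]; exact hα t s
      have := congrFun (huniq α' heq') θ
      simp only [Function.comp_apply, hα', Function.update_self] at this
      rw [hg θ'] at this
      exact hne this.symm
  · rintro ⟨P, ha, hb⟩
    refine ⟨Θ, f, P, ⟨id, fun θ s => ha θ s⟩, ?_⟩
    intro α hα
    funext θ
    have h1 : V (f θ) θ + P θ ≤ V (f (α θ)) θ + P (α θ) := hα θ θ
    by_contra hne
    exact absurd h1 (not_le.mpr (hb θ (α θ) (Ne.symm hne)))
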